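/- Let $[c,d] \subset [a,b]$ be nested closed intervals with $c < d$, and let $p$ be a real polynomial of degree at most $q$. Set $t = (d-c)/(b-a)$. Then $\sup_{x \in [a,b]} |p(x)| \le T_q(2/t - 1)\, \sup_{x \in [c,d]} |p(x)|$, where $T_q$ is the Chebyshev polynomial of the first kind of degree $q$. -/

import Mathlib

open Polynomial Polynomial.Chebyshev Real Finset


theorem natDegree_T_le' (n : ℕ) : (T ℝ (n:ℤ)).natDegree ≤ n := by
  have key : ∀ n : ℕ, (T ℝ (n:ℤ)).natDegree ≤ n ∧ (T ℝ ((n:ℤ)+1)).natDegree ≤ n+1 := by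
    intro n
    induction n with
    | zero => simp [Polynomial.Chebyshev.T_zero, Polynomial.Chebyshev.T_one]
    | succ m ih =>
      refine ⟨by exact_mod_cast ih.2, ?_⟩
      have h2 : ((m+1:ℕ):ℤ)+1 = (m:ℤ)+2 := by push_cast; ring
      rw [h2, Polynomial.Chebyshev.T_add_two]
      refine le_trans (Polynomial.natDegree_sub_le _ _) (max_le ?_ (le_trans ih.1 (by omega)))
      refine le_trans Polynomial.natDegree_mul_le ?_
      have h4 : (2 * X : ℝ[X]).natDegree ≤ 1 :=
        le_trans Polynomial.natDegree_mul_le (by simp)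
      have := ih.2
      omega
  exact (key n).1

theorem T_complex_cosh (θ : ℂ) (n : ℤ) : (T ℂ n).eval (Complex.cosh θ) = Complex.cosh (n * θ) := by
  rw [← Complex.cos_mul_I, ← Complex.cos_mul_I]
  have := T_complex_cos (θ * Complex.I) n
  rwa [← mul_assoc] at this

theorem T_real_cosh (θ : ℝ) (n : ℤ) : (T ℝ n).eval (Real.cosh θ) = Real.cosh (n * θ) := by
  exact_mod_cast _root_.T_complex_cosh θ n

theorem exists_cosh_eq {x : ℝ} (hx : 1 ≤ x) : ∃ θ : ℝ, 0 ≤ θ ∧ Real.cosh θ = x := by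
  have h1 : (0:ℝ) ≤ Real.log (2 * x) := Real.log_nonneg (by linarith)
  have h2 : x ≤ Real.cosh (Real.log (2 * x)) := by
    rw [Real.cosh_eq]
    have : Real.exp (Real.log (2 * x)) = 2 * x := Real.exp_log (by linarith)
    rw [this]
    have := Real.exp_pos (-(Real.log (2 * x)))
    linarith
  have := intermediate_value_Icc h1 Real.continuous_cosh.continuousOn (a := 0) (b := Real.log (2*x))
  have hx' : x ∈ Set.Icc (Real.cosh 0) (Real.cosh (Real.log (2*x))) := by
    rw [Real.cosh_zero]; exact ⟨hx, h2⟩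
  obtain ⟨θ, hθ, hθx⟩ := this hx'
  exact ⟨θ, hθ.1, hθx⟩

theorem one_le_T_eval {x : ℝ} (q : ℕ) (hx : 1 ≤ x) : 1 ≤ (T ℝ (q:ℤ)).eval x := by
  obtain ⟨θ, _, rfl⟩ := exists_cosh_eq hx
  rw [_root_.T_real_cosh]
  exact Real.one_le_cosh _

theorem T_eval_mono (q : ℕ) {x y : ℝ} (hx : 1 ≤ x) (hxy : x ≤ y) :
    (T ℝ (q:ℤ)).eval x ≤ (T ℝ (q:ℤ)).eval y := by
  obtain ⟨θ₁, hθ₁, rfl⟩ := exists_cosh_eq hx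
  obtain ⟨θ₂, hθ₂, rfl⟩ := exists_cosh_eq (le_trans hx hxy)
  rw [_root_.T_real_cosh, _root_.T_real_cosh]
  rw [Real.cosh_le_cosh] at hxy ⊢
  calc |(q:ℝ) * θ₁| = q * |θ₁| := by rw [abs_mul]; simp
  _ ≤ q * |θ₂| := by have := abs_nonneg θ₁; nlinarith [hxy]
  _ = |(q:ℝ) * θ₂| := by rw [abs_mul]; simp

theorem cheb_growth (q : ℕ) (p : ℝ[X]) (hdeg : p.natDegree ≤ q) (M : ℝ)
    (hM : ∀ x ∈ Set.Icc (-1:ℝ) 1, |Polynomial.eval x p| ≤ M) {y : ℝ} (hy : 1 ≤ y) :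
    |Polynomial.eval y p| ≤ (T ℝ (q:ℤ)).eval y * M := by
  set v : ℕ → ℝ := fun k => Real.cos (k * π / q) with hv
  set s : Finset ℕ := Finset.range (q+1) with hs
  have hvle : ∀ k, -1 ≤ v k ∧ v k ≤ 1 := fun k => ⟨Real.neg_one_le_cos _, Real.cos_le_one _⟩
  have hanti : ∀ {j k : ℕ}, j < k → k ≤ q → v k < v j := by
    intro j k hjk hkq
    have hq : 0 < q := by omega
    have hqR : (0:ℝ) < q := by exact_mod_cast hq
    have hmem : ∀ m : ℕ, m ≤ q → (m * π / q : ℝ) ∈ Set.Icc 0 π := by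
      intro m hm
      constructor
      · positivity
      · rw [div_le_iff₀ hqR]
        have : (m:ℝ) ≤ q := by exact_mod_cast hm
        nlinarith [Real.pi_pos]
    apply Real.strictAntiOn_cos (hmem j (le_trans (le_of_lt hjk) hkq)) (hmem k hkq)
    have hjk' : (j:ℝ) < k := by exact_mod_cast hjk
    have := Real.pi_pos
    apply div_lt_div_of_pos_right ?_ hqR
    nlinarith
  have hinj : Set.InjOn v ↑s := by
    intro j hj k hk hjk
    simp only [hs, coe_range, Set.mem_Iio, Nat.lt_succ_iff] at hj hk
    by_contra hne
    rcases lt_or_gt_of_ne hne with h | h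
    · exact absurd hjk (ne_of_gt (hanti h hk))
    · exact absurd hjk (ne_of_lt (hanti h hj))
  have hTnode : ∀ k ∈ s, (T ℝ (q:ℤ)).eval (v k) = (-1:ℝ)^k := by
    intro k hk
    simp only [hs, Finset.mem_range, Nat.lt_succ_iff] at hk
    have hcos : (T ℝ (q:ℤ)).eval (v k) = Real.cos (q * (k * π / q)) := by
      rw [hv]; rw [T_real_cos]; norm_num
    rcases Nat.eq_zero_or_pos q with hq0 | hq
    · have hk0 : k = 0 := by omega
      subst hk0; subst hq0
      simpa using hcos
    · have hqR : (q:ℝ) ≠ 0 := by positivity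
      rw [hcos]
      have : (q:ℝ) * (k * π / q) = k * π := by field_simp
      rw [this]
      simpa using Real.cos_nat_mul_pi_sub 0 k
  have hcard : s.card = q + 1 := Finset.card_range _
  have hbase : ∀ k ∈ s,
      |(Lagrange.basis s v k).eval y| = (-1:ℝ)^k * (Lagrange.basis s v k).eval y := by
    intro k hk
    simp only [hs, Finset.mem_range, Nat.lt_succ_iff] at hk
    set g : ℕ → ℝ := fun j => (v k - v j)⁻¹ * (y - v j) with hg
    have he : (Lagrange.basis s v k).eval y = ∏ j ∈ s.erase k, g j := by
      rw [Lagrange.basis, Polynomial.eval_prod]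
      refine Finset.prod_congr rfl fun j _ => ?_
      simp [Lagrange.basisDivisor, hg]
    have hfilter : (s.erase k).filter (· < k) = Finset.range k := by
      ext j; simp [hs]; omega
    have hsignprod : (∏ j ∈ s.erase k, (if j < k then (-1:ℝ) else 1)) = (-1:ℝ)^k := by
      rw [Finset.prod_ite, Finset.prod_const, Finset.prod_const, hfilter, Finset.card_range,
        one_pow, mul_one]
    have hsplit : ∀ j ∈ s.erase k, (if j < k then -g j else g j)
        = (if j < k then (-1:ℝ) else 1) * g j := by
      intro j _; split <;> ring
    have hprod : (-1:ℝ)^k * (Lagrange.basis s v k).eval y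
        = ∏ j ∈ s.erase k, (if j < k then -g j else g j) := by
      rw [he]
      conv_rhs => rw [Finset.prod_congr rfl hsplit, Finset.prod_mul_distrib]
      rw [hsignprod]
    have hnn : ∀ j ∈ s.erase k, 0 ≤ (if j < k then -g j else g j) := by
      intro j hj
      rw [Finset.mem_erase, hs, Finset.mem_range, Nat.lt_succ_iff] at hj
      have hyv : 0 ≤ y - v j := by linarith [(hvle j).2]
      split
      · next hjk =>
        have hlt := hanti hjk hk
        have hinv : (v k - v j)⁻¹ ≤ 0 := inv_nonpos.mpr (by linarith)
        rw [hg]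
        simp only
        nlinarith
      · next hjk =>
        have hlt := hanti (show k < j by omega) hj.2
        have hinv : 0 ≤ (v k - v j)⁻¹ := inv_nonneg.mpr (by linarith)
        exact mul_nonneg hinv hyv
    have h0 : 0 ≤ (-1:ℝ)^k * (Lagrange.basis s v k).eval y :=
      hprod ▸ Finset.prod_nonneg hnn
    calc |(Lagrange.basis s v k).eval y| = |(-1:ℝ)^k * (Lagrange.basis s v k).eval y| := by
          rw [abs_mul, abs_pow, abs_neg, abs_one, one_pow, one_mul]
    _ = (-1:ℝ)^k * (Lagrange.basis s v k).eval y := abs_of_nonneg h0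
  have hdegp : p.degree < (s.card : WithBot ℕ) := by
    rw [hcard]
    exact lt_of_le_of_lt Polynomial.degree_le_natDegree
      (by exact_mod_cast Nat.lt_succ_of_le hdeg)
  have hdegT : (T ℝ (q:ℤ)).degree < (s.card : WithBot ℕ) := by
    rw [hcard]
    exact lt_of_le_of_lt Polynomial.degree_le_natDegree
      (by exact_mod_cast Nat.lt_succ_of_le (natDegree_T_le' q))
  have hpeval : Polynomial.eval y p
      = ∑ k ∈ s, Polynomial.eval (v k) p * (Lagrange.basis s v k).eval y := by
    conv_lhs => rw [Lagrange.eq_interpolate hinj hdegp]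
    rw [Lagrange.interpolate_apply, Polynomial.eval_finset_sum]
    simp [Polynomial.eval_mul]
  have hTeval : (T ℝ (q:ℤ)).eval y = ∑ k ∈ s, (-1:ℝ)^k * (Lagrange.basis s v k).eval y := by
    conv_lhs => rw [Lagrange.eq_interpolate hinj hdegT]
    rw [Lagrange.interpolate_apply, Polynomial.eval_finset_sum]
    refine Finset.sum_congr rfl fun k hk => ?_
    rw [Polynomial.eval_mul, Polynomial.eval_C, hTnode k hk]
  calc |Polynomial.eval y p|
      ≤ ∑ k ∈ s, |Polynomial.eval (v k) p * (Lagrange.basis s v k).eval y| :=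
        hpeval ▸ Finset.abs_sum_le_sum_abs _ _
    _ ≤ ∑ k ∈ s, M * ((-1:ℝ)^k * (Lagrange.basis s v k).eval y) := by
        refine Finset.sum_le_sum fun k hk => ?_
        rw [abs_mul, hbase k hk]
        refine mul_le_mul_of_nonneg_right (hM (v k) ⟨(hvle k).1, (hvle k).2⟩) ?_
        rw [← hbase k hk]; exact abs_nonneg _
    _ = M * ∑ k ∈ s, (-1:ℝ)^k * (Lagrange.basis s v k).eval y := by rw [Finset.mul_sum]
    _ = M * (T ℝ (q:ℤ)).eval y := by rw [hTeval]
    _ = (T ℝ (q:ℤ)).eval y * M := mul_comm _ _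


/-- Chebyshev's inequality: for nested intervals `[c,d] ⊆ [a,b]` and a real polynomial `p`
of degree at most `q`, with `t = (d-c)/(b-a)`,
`sup_{[a,b]} |p| ≤ T_q(2/t - 1) · sup_{[c,d]} |p|`. -/
theorem chebyshev_remez_inequality (a b c d : ℝ) (hac : a ≤ c) (hcd : c < d) (hdb : d ≤ b)
    (q : ℕ) (p : Polynomial ℝ) (hdeg : p.natDegree ≤ q) :
    sSup ((fun x => |p.eval x|) '' Set.Icc a b)
      ≤ (Polynomial.Chebyshev.T ℝ q).eval (2 / ((d - c) / (b - a)) - 1)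
        * sSup ((fun x => |p.eval x|) '' Set.Icc c d) := by
  have hba : 0 < b - a := by linarith
  have hdc : 0 < d - c := by linarith
  set sV : ℝ := 2 / ((d - c) / (b - a)) - 1 with hsV
  have hsimp : sV = 2 * (b - a) / (d - c) - 1 := by rw [hsV, div_div_eq_mul_div]
  have hs1 : 1 ≤ sV := by
    rw [hsimp, le_sub_iff_add_le, le_div_iff₀ hdc]; linarith
  have hcont : Continuous fun x : ℝ => |Polynomial.eval x p| := (p.continuous).abs
  have hbdd : BddAbove ((fun x => |p.eval x|) '' Set.Icc c d) :=
    (isCompact_Icc.image hcont).bddAbove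
  set M := sSup ((fun x => |p.eval x|) '' Set.Icc c d) with hMdef
  have hM : ∀ x ∈ Set.Icc c d, |p.eval x| ≤ M := fun x hx => le_csSup hbdd ⟨x, hx, rfl⟩
  have hM0 : 0 ≤ M := le_trans (abs_nonneg _) (hM c ⟨le_refl c, le_of_lt hcd⟩)
  have hT1 : 1 ≤ (T ℝ (q:ℤ)).eval sV := one_le_T_eval q hs1
  set L : ℝ[X] := Polynomial.C ((d-c)/2) * Polynomial.X + Polynomial.C ((c+d)/2) with hL
  set P := p.comp L with hP
  have hPdeg : P.natDegree ≤ q := by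
    calc P.natDegree ≤ p.natDegree * L.natDegree := Polynomial.natDegree_comp_le
    _ ≤ q * 1 := Nat.mul_le_mul hdeg (Polynomial.natDegree_linear_le)
    _ = q := mul_one q
  have hPeval : ∀ t : ℝ, P.eval t = p.eval ((d-c)/2 * t + (c+d)/2) := by
    intro t; rw [hP, Polynomial.eval_comp]; rw [hL]; simp
  have hMP : ∀ t ∈ Set.Icc (-1:ℝ) 1, |P.eval t| ≤ M := by
    intro t ht
    rw [hPeval]
    apply hM
    constructor
    · nlinarith [ht.1]
    · nlinarith [ht.2]
  have hpoint : ∀ x ∈ Set.Icc a b, |p.eval x| ≤ (T ℝ (q:ℤ)).eval sV * M := by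
    intro x hx
    set u : ℝ := (2*x - (c+d))/(d-c) with hu
    have hxu : p.eval x = P.eval u := by
      rw [hPeval]; congr 1; rw [hu]; field_simp; ring
    have hub : u ≤ sV := by
      rw [hu, div_le_iff₀ hdc, hsimp, sub_mul, div_mul_cancel₀ _ (ne_of_gt hdc)]
      nlinarith [hx.2]
    have hlb : -sV ≤ u := by
      rw [hu, le_div_iff₀ hdc, hsimp]
      have : (2 * (b - a) / (d - c)) * (d - c) = 2 * (b - a) :=
        div_mul_cancel₀ _ (ne_of_gt hdc)
      rw [neg_mul, sub_mul, this]
      nlinarith [hx.1]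
    rcases le_or_gt u 1 with h1 | h1
    · rcases le_or_gt (-1 : ℝ) u with h2 | h2
      · rw [hxu]
        calc |P.eval u| ≤ M := hMP u ⟨h2, h1⟩
        _ ≤ (T ℝ (q:ℤ)).eval sV * M := le_mul_of_one_le_left hM0 hT1
      · set Q := P.comp (-Polynomial.X) with hQ
        have hQdeg : Q.natDegree ≤ q := by
          calc Q.natDegree ≤ P.natDegree * (-Polynomial.X : ℝ[X]).natDegree :=
            Polynomial.natDegree_comp_le
          _ ≤ q * 1 := Nat.mul_le_mul hPdeg (by rw [Polynomial.natDegree_neg, Polynomial.natDegree_X])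
          _ = q := mul_one q
        have hQev : ∀ t : ℝ, Q.eval t = P.eval (-t) := by
          intro t; rw [hQ, Polynomial.eval_comp]; simp
        have hQM : ∀ t ∈ Set.Icc (-1:ℝ) 1, |Q.eval t| ≤ M := by
          intro t ht
          rw [hQev]
          exact hMP (-t) ⟨by linarith [ht.2], by linarith [ht.1]⟩
        have h1u : (1:ℝ) ≤ -u := by linarith
        have hgrow := cheb_growth q Q hQdeg M hQM h1u
        rw [hxu, ← neg_neg u, ← hQev (-u)]
        calc |Q.eval (-u)| ≤ (T ℝ (q:ℤ)).eval (-u) * M := hgrow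
        _ ≤ (T ℝ (q:ℤ)).eval sV * M :=
            mul_le_mul_of_nonneg_right (T_eval_mono q h1u (by linarith)) hM0
    · have hgrow := cheb_growth q P hPdeg M hMP (le_of_lt h1)
      rw [hxu]
      calc |P.eval u| ≤ (T ℝ (q:ℤ)).eval u * M := hgrow
      _ ≤ (T ℝ (q:ℤ)).eval sV * M :=
          mul_le_mul_of_nonneg_right (T_eval_mono q (le_of_lt h1) hub) hM0
  apply Real.sSup_le
  · rintro z ⟨x, hx, rfl⟩
    exact hpoint x hx
  · exact mul_nonneg (by linarith) hM0
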